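/- arXiv:1510.01672 — 5 statements merged into one kernel-verified Lean document; each statement's English description precedes it below -/
import Mathlib

section
/- If A and B are positive semidefinite contractions on a complex inner product space, then the Hermitian operator (AB + BA)/2 satisfies (AB+BA)/2 ≥ -I/8, i.e., AB + BA + I/4 is positive semidefinite. -/
theorem stmt0 {H : Type*} [NormedAddCommGroup H] [InnerProductSpace ℂ H]
    [CompleteSpace H] (A B : H →L[ℂ] H)
    (hA : A.IsPositive) (hB : B.IsPositive) (hA1 : ‖A‖ ≤ 1) (hB1 : ‖B‖ ≤ 1) :
    (A * B + B * A + (4 : ℂ)⁻¹ • 1).IsPositive := by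
  rw [← ContinuousLinearMap.nonneg_iff_isPositive]
  have hA0 : (0 : H →L[ℂ] H) ≤ A := (ContinuousLinearMap.nonneg_iff_isPositive A).mpr hA
  have hB0 : (0 : H →L[ℂ] H) ≤ B := (ContinuousLinearMap.nonneg_iff_isPositive B).mpr hB
  -- A*A ≤ A
  have key : ∀ T : H →L[ℂ] H, 0 ≤ T → ‖T‖ ≤ 1 → 0 ≤ T - T * T := by
    intro T hT0 hT1
    have hT1' : T ≤ 1 := (CStarAlgebra.norm_le_one_iff_of_nonneg T hT0).mp hT1
    set s : H →L[ℂ] H := CFC.sqrt T with hs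
    have hs0 : 0 ≤ s := CFC.sqrt_nonneg T
    have hss : s * s = T := CFC.sqrt_mul_sqrt_self T hT0
    have hsa : star s = s := (IsSelfAdjoint.of_nonneg hs0).star_eq
    have h1 : (0 : H →L[ℂ] H) ≤ star s * (1 - T) * s :=
      star_left_conjugate_nonneg (by rwa [sub_nonneg]) s
    have h2 : star s * (1 - T) * s = T - T * T := by
      rw [hsa, mul_sub, mul_one, sub_mul, hss, ← hss]
      noncomm_ring
    rwa [h2] at h1
  have hC : (0 : H →L[ℂ] H) ≤ (A + B - (2 : ℂ)⁻¹ • 1) * (A + B - (2 : ℂ)⁻¹ • 1) := by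
    have hsa : star (A + B - (2 : ℂ)⁻¹ • 1) = A + B - (2 : ℂ)⁻¹ • 1 := by
      have := (IsSelfAdjoint.of_nonneg hA0).star_eq
      have := (IsSelfAdjoint.of_nonneg hB0).star_eq
      simp [star_sub, star_smul, *]
    simpa [hsa] using star_mul_self_nonneg (A + B - (2 : ℂ)⁻¹ • 1)
  have hid : A * B + B * A + (4 : ℂ)⁻¹ • 1 =
      (A + B - (2 : ℂ)⁻¹ • 1) * (A + B - (2 : ℂ)⁻¹ • 1) + (A - A * A) + (B - B * B) := by
    have h4 : (4 : ℂ)⁻¹ = 2⁻¹ * 2⁻¹ := by norm_num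
    rw [h4, ← smul_smul]
    noncomm_ring
    module
  rw [hid]
  exact add_nonneg (add_nonneg hC (key A hA0 hA1)) (key B hB0 hB1)
end

section
/- If A and B are positive semidefinite contractions on a complex Hilbert space, then the commutator satisfies ‖AB - BA‖ ≤ 1/2. -/
open ContinuousLinearMap in
lemma aux_half {H : Type*} [NormedAddCommGroup H] [InnerProductSpace ℂ H]
    [CompleteSpace H] (A : H →L[ℂ] H) (hA : A.IsPositive) (hA1 : ‖A‖ ≤ 1) :
    ‖A - algebraMap ℝ (H →L[ℂ] H) (1/2)‖ ≤ 1 / 2 := by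
  obtain hH | hH := subsingleton_or_nontrivial H
  · have : Subsingleton (H →L[ℂ] H) := ⟨fun f g => ContinuousLinearMap.ext fun x => Subsingleton.elim _ _⟩
    rw [Subsingleton.elim (A - algebraMap ℝ (H →L[ℂ] H) (1/2)) 0]
    simp
  have hsa : IsSelfAdjoint A := hA.isSelfAdjoint
  have hpos : (0 : H →L[ℂ] H) ≤ A := (ContinuousLinearMap.nonneg_iff_isPositive A).mpr hA
  have h1 : A - algebraMap ℝ (H →L[ℂ] H) (1/2) = cfc (fun x : ℝ => x - 1/2) A := by
    rw [cfc_sub (fun x : ℝ => x) (fun _ : ℝ => (1/2 : ℝ)) A, cfc_id' ℝ A, cfc_const (1/2 : ℝ) A]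
  rw [h1]
  refine norm_cfc_le (by norm_num) fun x hx => ?_
  have hx0 : 0 ≤ x := spectrum_nonneg_of_nonneg hpos hx
  have hx1 : x ≤ 1 := by
    calc x ≤ ‖x‖ := Real.le_norm_self x
    _ ≤ ‖A‖ := spectrum.norm_le_norm_of_mem hx
    _ ≤ 1 := hA1
  rw [Real.norm_eq_abs, abs_le]
  constructor <;> linarith

theorem stmt2 {H : Type*} [NormedAddCommGroup H] [InnerProductSpace ℂ H]
    [CompleteSpace H] (A B : H →L[ℂ] H)
    (hA : A.IsPositive) (hB : B.IsPositive) (hA1 : ‖A‖ ≤ 1) (hB1 : ‖B‖ ≤ 1) :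
    ‖A * B - B * A‖ ≤ 1 / 2 := by
  set c : H →L[ℂ] H := algebraMap ℝ (H →L[ℂ] H) (1/2) with hc
  have hcomm : ∀ T : H →L[ℂ] H, c * T = T * c := fun T => (Algebra.commutes (1/2 : ℝ) T)
  have key : A * B - B * A = (A - c) * (B - c) - (B - c) * (A - c) := by
    noncomm_ring [hcomm A, hcomm B]
  have ha := aux_half A hA hA1
  have hb := aux_half B hB hB1
  calc ‖A * B - B * A‖ = ‖(A - c) * (B - c) - (B - c) * (A - c)‖ := by rw [key]
    _ ≤ ‖(A - c) * (B - c)‖ + ‖(B - c) * (A - c)‖ := norm_sub_le _ _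
    _ ≤ ‖A - c‖ * ‖B - c‖ + ‖B - c‖ * ‖A - c‖ := by
        gcongr <;> exact norm_mul_le _ _
    _ ≤ (1/2) * (1/2) + (1/2) * (1/2) := by
        gcongr
    _ = 1 / 2 := by norm_num
end

section
/- If A and B are positive semidefinite contractions on a complex Hilbert space, then every element z = x + iy of the numerical range W(AB) satisfies -1/8 ≤ x ≤ 1 and -1/4 ≤ y ≤ 1/4. -/
open scoped InnerProductSpace

section aux

variable {H : Type*} [NormedAddCommGroup H] [InnerProductSpace ℂ H] [CompleteSpace H]

lemma key_sq (T : H →L[ℂ] H) (hT : T.IsPositive) (hT1 : ‖T‖ ≤ 1) (x : H) :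
    ‖T x‖ ^ 2 ≤ (⟪x, T x⟫_ℂ).re := by
  have hsym : ∀ a b : H, ⟪T a, b⟫_ℂ = ⟪a, T b⟫_ℂ := fun a b =>
    (ContinuousLinearMap.isSelfAdjoint_iff_isSymmetric.mp hT.isSelfAdjoint) a b
  have h0 : 0 ≤ (⟪x - T x, T (x - T x)⟫_ℂ).re := hT.re_inner_nonneg_right _
  have hexp : ⟪x - T x, T (x - T x)⟫_ℂ
      = ⟪x, T x⟫_ℂ - ⟪x, T (T x)⟫_ℂ - ⟪T x, T x⟫_ℂ + ⟪T x, T (T x)⟫_ℂ := by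
    rw [map_sub]
    simp only [inner_sub_left, inner_sub_right]
    ring
  have h1 : ⟪x, T (T x)⟫_ℂ = ⟪T x, T x⟫_ℂ := (hsym x (T x)).symm
  have h2 : (⟪T x, T (T x)⟫_ℂ).re ≤ ‖T x‖ ^ 2 := by
    calc (⟪T x, T (T x)⟫_ℂ).re ≤ ‖(⟪T x, T (T x)⟫_ℂ)‖ := Complex.re_le_norm _
      _ ≤ ‖T x‖ * ‖T (T x)‖ := norm_inner_le_norm _ _
      _ ≤ ‖T x‖ * (1 * ‖T x‖) := by
          gcongr
          calc ‖T (T x)‖ ≤ ‖T‖ * ‖T x‖ := T.le_opNorm _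
            _ ≤ 1 * ‖T x‖ := by gcongr
      _ = ‖T x‖ ^ 2 := by ring
  have hn : (⟪T x, T x⟫_ℂ).re = ‖T x‖ ^ 2 := by
    rw [inner_self_eq_norm_sq_to_K]
    norm_cast
  rw [hexp, h1] at h0
  simp only [Complex.add_re, Complex.sub_re] at h0
  rw [hn] at h0
  linarith

lemma im_zero (T : H →L[ℂ] H) (hT : IsSelfAdjoint T) (x : H) : (⟪x, T x⟫_ℂ).im = 0 := by
  have hsym : ∀ a b : H, ⟪T a, b⟫_ℂ = ⟪a, T b⟫_ℂ := fun a b =>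
    (ContinuousLinearMap.isSelfAdjoint_iff_isSymmetric.mp hT) a b
  have h : (starRingEnd ℂ) ⟪x, T x⟫_ℂ = ⟪x, T x⟫_ℂ := by
    rw [inner_conj_symm, hsym x x]
  rw [Complex.conj_eq_iff_im] at h
  exact h

end aux

set_option maxHeartbeats 1000000 in
theorem stmt4 {H : Type*} [NormedAddCommGroup H] [InnerProductSpace ℂ H]
    [CompleteSpace H] (A B : H →L[ℂ] H)
    (hA : A.IsPositive) (hB : B.IsPositive) (hA1 : ‖A‖ ≤ 1) (hB1 : ‖B‖ ≤ 1) :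
    ∀ x : H, ‖x‖ = 1 →
      -(1 / 8) ≤ (inner ℂ x ((A * B) x) : ℂ).re ∧ (inner ℂ x ((A * B) x) : ℂ).re ≤ 1 ∧
      -(1 / 4) ≤ (inner ℂ x ((A * B) x) : ℂ).im ∧ (inner ℂ x ((A * B) x) : ℂ).im ≤ 1 / 4 := by
  intro x hx
  have hAsym : ∀ a b : H, ⟪A a, b⟫_ℂ = ⟪a, A b⟫_ℂ := fun a b =>
    (ContinuousLinearMap.isSelfAdjoint_iff_isSymmetric.mp hA.isSelfAdjoint) a b
  set u := A x with hu
  set v := B x with hv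
  have hz : (inner ℂ x ((A * B) x) : ℂ) = ⟪u, v⟫_ℂ := by
    rw [ContinuousLinearMap.mul_apply]
    exact (hAsym x (B x)).symm
  set a := (⟪x, u⟫_ℂ).re with ha
  set b := (⟪x, v⟫_ℂ).re with hb
  have ha0 : 0 ≤ a := hA.re_inner_nonneg_right x
  have hb0 : 0 ≤ b := hB.re_inner_nonneg_right x
  have hnormu : ‖u‖ ≤ 1 := by
    calc ‖u‖ ≤ ‖A‖ * ‖x‖ := A.le_opNorm x
      _ ≤ 1 * 1 := by rw [hx]; gcongr
      _ = 1 := one_mul 1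
  have hnormv : ‖v‖ ≤ 1 := by
    calc ‖v‖ ≤ ‖B‖ * ‖x‖ := B.le_opNorm x
      _ ≤ 1 * 1 := by rw [hx]; gcongr
      _ = 1 := one_mul 1
  have hu2 : ‖u‖ ^ 2 ≤ a := key_sq A hA hA1 x
  have hv2 : ‖v‖ ^ 2 ≤ b := key_sq B hB hB1 x
  -- real part lower bound
  have hsum : a + b ≤ ‖u + v‖ := by
    have h1 : a + b = (⟪x, u + v⟫_ℂ).re := by rw [inner_add_right]; simp [ha, hb]
    have h2 : (⟪x, u + v⟫_ℂ).re ≤ ‖(⟪x, u + v⟫_ℂ)‖ := Complex.re_le_norm _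
    have h3 : ‖(⟪x, u + v⟫_ℂ)‖ ≤ ‖x‖ * ‖u + v‖ := norm_inner_le_norm _ _
    rw [hx, one_mul] at h3
    linarith
  have hns : ‖u + v‖ ^ 2 = ‖u‖ ^ 2 + 2 * (⟪u, v⟫_ℂ).re + ‖v‖ ^ 2 := by
    have := norm_add_sq (𝕜 := ℂ) u v
    simpa [RCLike.re_to_complex] using this
  have hre_lower : -(1/8 : ℝ) ≤ (⟪u, v⟫_ℂ).re := by
    have h4 : (a + b) ^ 2 ≤ ‖u + v‖ ^ 2 := pow_le_pow_left₀ (by linarith) hsum 2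
    have key2 : (a + b) ^ 2 - (a + b) ≤ 2 * (⟪u, v⟫_ℂ).re := by linarith
    have hsq0 : -(1/4 : ℝ) ≤ (a + b) ^ 2 - (a + b) := by nlinarith [sq_nonneg (a + b - 1/2)]
    linarith
  -- real part upper bound
  have hre_upper : (⟪u, v⟫_ℂ).re ≤ 1 := by
    calc (⟪u, v⟫_ℂ).re ≤ ‖(⟪u, v⟫_ℂ)‖ := Complex.re_le_norm _
      _ ≤ ‖u‖ * ‖v‖ := norm_inner_le_norm _ _
      _ ≤ 1 * 1 := mul_le_mul hnormu hnormv (norm_nonneg _) zero_le_one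
      _ = 1 := one_mul 1
  -- imaginary part
  have haim : (⟪x, u⟫_ℂ).im = 0 := im_zero A hA.isSelfAdjoint x
  have hbim : (⟪x, v⟫_ℂ).im = 0 := im_zero B hB.isSelfAdjoint x
  have huxim : (⟪u, x⟫_ℂ).im = 0 := by
    rw [← inner_conj_symm, Complex.conj_im, haim, neg_zero]
  have hvxim : (⟪v, x⟫_ℂ).im = 0 := by
    rw [← inner_conj_symm, Complex.conj_im, hbim, neg_zero]
  have hre_ux : (⟪u, x⟫_ℂ).re = a := by
    rw [← inner_conj_symm, Complex.conj_re]
  have hre_vx : (⟪v, x⟫_ℂ).re = b := by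
    rw [← inner_conj_symm, Complex.conj_re]
  set c : ℂ := ((1/2 : ℝ) : ℂ) with hc
  have hcx : (starRingEnd ℂ) c = c := Complex.conj_ofReal _
  have hxx : (⟪x, x⟫_ℂ).im = 0 := by
    have h := inner_conj_symm (𝕜 := ℂ) x x
    rw [Complex.conj_eq_iff_im] at h
    exact h
  have hex : ⟪u - c • x, v - c • x⟫_ℂ
      = ⟪u, v⟫_ℂ - c * ⟪u, x⟫_ℂ - c * ⟪x, v⟫_ℂ + c * (c * ⟪x, x⟫_ℂ) := by
    simp only [inner_sub_left, inner_sub_right, inner_smul_left, inner_smul_right, hcx]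
    ring
  have him_eq : (⟪u - c • x, v - c • x⟫_ℂ).im = (⟪u, v⟫_ℂ).im := by
    rw [hex]
    simp [Complex.add_im, Complex.sub_im, Complex.mul_im, Complex.mul_re, hc,
      haim, hbim, huxim, hxx, hx]
  have hcsmul : ‖c • x‖ = 1/2 := by
    rw [norm_smul, hx, mul_one, hc, Complex.norm_real]
    norm_num
  have hun : ‖u - c • x‖ ≤ 1/2 := by
    have hexp : ‖u - c • x‖ ^ 2 = ‖u‖ ^ 2 - 2 * (⟪u, c • x⟫_ℂ).re + ‖c • x‖ ^ 2 := by
      have := norm_sub_sq (𝕜 := ℂ) u (c • x)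
      simpa only [RCLike.re_to_complex] using this
    have h5 : (⟪u, c • x⟫_ℂ).re = (1/2) * a := by
      rw [inner_smul_right]
      simp [Complex.mul_re, hc, hre_ux, huxim]
    have hsq : ‖u - c • x‖ ^ 2 ≤ (1/2) ^ 2 := by
      rw [hexp, h5, hcsmul]; linarith [hu2]
    exact (pow_le_pow_iff_left₀ (norm_nonneg _) (by norm_num) two_ne_zero).mp hsq
  have hvn : ‖v - c • x‖ ≤ 1/2 := by
    have hexp : ‖v - c • x‖ ^ 2 = ‖v‖ ^ 2 - 2 * (⟪v, c • x⟫_ℂ).re + ‖c • x‖ ^ 2 := by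
      have := norm_sub_sq (𝕜 := ℂ) v (c • x)
      simpa only [RCLike.re_to_complex] using this
    have h5 : (⟪v, c • x⟫_ℂ).re = (1/2) * b := by
      rw [inner_smul_right]
      simp [Complex.mul_re, hc, hre_vx, hvxim]
    have hsq : ‖v - c • x‖ ^ 2 ≤ (1/2) ^ 2 := by
      rw [hexp, h5, hcsmul]; linarith [hv2]
    exact (pow_le_pow_iff_left₀ (norm_nonneg _) (by norm_num) two_ne_zero).mp hsq
  have him_bound : |(⟪u, v⟫_ℂ).im| ≤ 1/4 := by
    rw [← him_eq]
    calc |(⟪u - c • x, v - c • x⟫_ℂ).im| ≤ ‖(⟪u - c • x, v - c • x⟫_ℂ)‖ :=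
          Complex.abs_im_le_norm _
      _ ≤ ‖u - c • x‖ * ‖v - c • x‖ := norm_inner_le_norm _ _
      _ ≤ (1/2) * (1/2) := mul_le_mul hun hvn (norm_nonneg _) (by norm_num)
      _ = 1/4 := by norm_num
  rw [hz]
  refine ⟨hre_lower, hre_upper, ?_, ?_⟩
  · linarith [neg_abs_le (⟪u, v⟫_ℂ).im]
  · linarith [le_abs_self (⟪u, v⟫_ℂ).im]
end

section
/- For A ∈ Mₙ(ℂ), the numerical range W(A) is a (possibly degenerate) line segment in ℂ if and only if A is normal and all its eigenvalues lie on a common straight line. -/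
open Matrix

namespace Stmt9Aux
variable {n : ℕ}

lemma smul_quad (M : Matrix (Fin n) (Fin n) ℂ) (a : ℂ) (y : Fin n → ℂ) :
    star (a • y) ⬝ᵥ (M *ᵥ (a • y)) = (starRingEnd ℂ) a * a * (star y ⬝ᵥ (M *ᵥ y)) := by
  simp [star_smul, smul_dotProduct, dotProduct_smul, mulVec_smul, smul_eq_mul]
  ring

lemma smul_dot (a : ℂ) (y : Fin n → ℂ) :
    star (a • y) ⬝ᵥ (a • y) = (starRingEnd ℂ) a * a * (star y ⬝ᵥ y) := by
  simp [star_smul, smul_dotProduct, dotProduct_smul, smul_eq_mul]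
  ring

lemma conj_quad (M : Matrix (Fin n) (Fin n) ℂ) (x : Fin n → ℂ) :
    (starRingEnd ℂ) (star x ⬝ᵥ (M *ᵥ x)) = star x ⬝ᵥ (Mᴴ *ᵥ x) := by
  simp only [dotProduct, mulVec, Matrix.conjTranspose_apply, Finset.mul_sum, map_sum, dotProduct]
  rw [Finset.sum_comm]
  refine Finset.sum_congr rfl fun i _ => Finset.sum_congr rfl fun j _ => ?_
  simp only [_root_.map_mul, Pi.star_apply, RCLike.star_def, Complex.conj_conj]
  ring

lemma quad_zero {M : Matrix (Fin n) (Fin n) ℂ}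
    (h : ∀ x : Fin n → ℂ, star x ⬝ᵥ x = 1 → star x ⬝ᵥ (M *ᵥ x) = 0) : M = 0 := by
  have hall : ∀ x : Fin n → ℂ, star x ⬝ᵥ (M *ᵥ x) = 0 := by
    intro x
    rcases eq_or_ne x 0 with rfl | hx
    · simp
    · set c : ℝ := ∑ i, Complex.normSq (x i) with hc
      have hcpos : 0 < c := by
        have : ∃ i, x i ≠ 0 := by
          by_contra hcon
          push_neg at hcon
          exact hx (funext hcon)
        obtain ⟨i, hi⟩ := this
        exact Finset.sum_pos' (fun j _ => Complex.normSq_nonneg _)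
          ⟨i, Finset.mem_univ i, Complex.normSq_pos.mpr hi⟩
      have hdot : star x ⬝ᵥ x = (c : ℂ) := by
        simp [dotProduct, hc, Complex.normSq_eq_conj_mul_self]
      set r : ℝ := (Real.sqrt c)⁻¹ with hr
      have hrr : r * r * c = 1 := by
        rw [hr, ← mul_inv, Real.mul_self_sqrt hcpos.le]
        field_simp
      have hconj : (starRingEnd ℂ) (r : ℂ) * (r : ℂ) = ((r * r : ℝ) : ℂ) := by
        rw [Complex.conj_ofReal]; push_cast; ring
      have hunit : star ((r : ℂ) • x) ⬝ᵥ ((r : ℂ) • x) = 1 := by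
        rw [smul_dot, hconj, hdot]
        norm_cast
      have h0 := h _ hunit
      rw [smul_quad, hconj] at h0
      have hrne : ((r * r : ℝ) : ℂ) ≠ 0 := by
        have : r ≠ 0 := by
          rw [hr]
          positivity
        push_cast
        exact mul_ne_zero (by exact_mod_cast this) (by exact_mod_cast this)
      exact (mul_eq_zero.mp h0).resolve_left hrne
  have hlin : Matrix.toEuclideanLin M = 0 := by
    rw [← inner_map_self_eq_zero]
    intro x
    have h1 : (inner ℂ x ((Matrix.toEuclideanLin M) x) : ℂ) = 0 := by
      rw [EuclideanSpace.inner_eq_star_dotProduct]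
      simpa [dotProduct_comm] using hall (WithLp.equiv 2 _ x)
    calc (inner ℂ ((Matrix.toEuclideanLin M) x) x : ℂ)
        = (starRingEnd ℂ) (inner ℂ x ((Matrix.toEuclideanLin M) x) : ℂ) := (inner_conj_symm _ _).symm
      _ = 0 := by rw [h1, map_zero]
  exact (LinearEquiv.map_eq_zero_iff Matrix.toEuclideanLin).mp hlin

end Stmt9Aux

namespace Stmt9Aux2
open Stmt9Aux
open scoped Matrix.Norms.L2Operator
variable {n : ℕ}

lemma quad_real_hermitian {M : Matrix (Fin n) (Fin n) ℂ}
    (h : ∀ x : Fin n → ℂ, star x ⬝ᵥ x = 1 → ∃ r : ℝ, star x ⬝ᵥ (M *ᵥ x) = (r : ℂ)) :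
    M.IsHermitian := by
  have h0 : M - Mᴴ = 0 := by
    apply quad_zero
    intro x hx
    obtain ⟨r, hr⟩ := h x hx
    have hconj := conj_quad M x
    rw [hr, Complex.conj_ofReal] at hconj
    rw [Matrix.sub_mulVec, dotProduct_sub, hr, ← hconj, sub_self]
  exact (sub_eq_zero.mp h0).symm

lemma herm_isSelfAdjoint {M : Matrix (Fin n) (Fin n) ℂ} (h : M.IsHermitian) :
    IsSelfAdjoint M := h

lemma spec_real_of_hermitian {M : Matrix (Fin n) (Fin n) ℂ} (hM : M.IsHermitian) :
    spectrum ℂ M ⊆ Set.range (Complex.ofReal) := by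
  letI : CompleteSpace (Matrix (Fin n) (Fin n) ℂ) := FiniteDimensional.complete ℂ _
  letI : CStarAlgebra (Matrix (Fin n) (Fin n) ℂ) := { }
  have hsa : IsSelfAdjoint M := hM
  have hrestr := hsa.spectrumRestricts
  intro z hz
  rw [← hrestr.algebraMap_image] at hz
  obtain ⟨r, -, rfl⟩ := hz
  exact ⟨r, rfl⟩

lemma normal_real_spec_hermitian {M : Matrix (Fin n) (Fin n) ℂ}
    (hM : M * Mᴴ = Mᴴ * M) (hs : spectrum ℂ M ⊆ Set.range (Complex.ofReal)) :
    M.IsHermitian := by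
  letI : CompleteSpace (Matrix (Fin n) (Fin n) ℂ) := FiniteDimensional.complete ℂ _
  letI : CStarAlgebra (Matrix (Fin n) (Fin n) ℂ) := { }
  have hnorm : IsStarNormal M := ⟨by
    show star M * M = M * star M
    simpa [Matrix.star_eq_conjTranspose] using hM.symm⟩
  have hrestr : SpectrumRestricts M Complex.reCLM := by
    rw [SpectrumRestricts.real_iff]
    intro x hx
    obtain ⟨r, rfl⟩ := hs hx
    simp
  have : IsSelfAdjoint M :=
    isSelfAdjoint_iff_isStarNormal_and_quasispectrumRestricts.mpr ⟨hnorm, hrestr⟩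
  exact this

end Stmt9Aux2

namespace Stmt9Aux3
open Stmt9Aux Stmt9Aux2
variable {n : ℕ}

lemma normal_of_decomp (α β : ℂ) {H : Matrix (Fin n) (Fin n) ℂ} (hH : H.IsHermitian) :
    (α • H + β • 1) * (α • H + β • 1)ᴴ = (α • H + β • 1)ᴴ * (α • H + β • 1) := by
  simp only [conjTranspose_add, conjTranspose_smul, conjTranspose_one, hH.eq,
    add_mul, mul_add, Matrix.smul_mul, Matrix.mul_smul, smul_smul, mul_one, one_mul]
  module

lemma normal_shift {A : Matrix (Fin n) (Fin n) ℂ} (hA : A * Aᴴ = Aᴴ * A) (c e : ℂ) :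
    (c • (A - e • 1)) * (c • (A - e • 1))ᴴ = (c • (A - e • 1))ᴴ * (c • (A - e • 1)) := by
  simp only [conjTranspose_smul, conjTranspose_sub, conjTranspose_one,
    Matrix.smul_mul, Matrix.mul_smul, sub_mul, mul_sub, mul_one, one_mul, smul_smul]
  rw [hA]
  module

lemma isUnit_smul_iff' {c : ℂ} (hc : c ≠ 0) (M : Matrix (Fin n) (Fin n) ℂ) :
    IsUnit (c • M) ↔ IsUnit M := by
  have := isUnit_smul_iff (Units.mk0 c hc) M
  simpa [Units.smul_def] using this

end Stmt9Aux3

namespace Stmt9Aux4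
open Stmt9Aux
variable {n : ℕ}

lemma dot_self_eq (y : Fin n → ℂ) :
    star y ⬝ᵥ y = ((∑ i, Complex.normSq (y i) : ℝ) : ℂ) := by
  push_cast
  simp [dotProduct, Complex.normSq_eq_conj_mul_self]

lemma diag_quad (d : Fin n → ℝ) (y : Fin n → ℂ) :
    star y ⬝ᵥ ((Matrix.diagonal (Complex.ofReal ∘ d)) *ᵥ y)
      = ((∑ i, d i * Complex.normSq (y i) : ℝ) : ℂ) := by
  push_cast
  simp only [dotProduct, mulVec_diagonal, Function.comp_apply, Pi.star_apply, RCLike.star_def,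
    Complex.normSq_eq_conj_mul_self]
  exact Finset.sum_congr rfl fun i _ => by push_cast; ring

lemma unitary_quad (U : Matrix.unitaryGroup (Fin n) ℂ) (M : Matrix (Fin n) (Fin n) ℂ)
    (y : Fin n → ℂ) :
    star ((U : Matrix (Fin n) (Fin n) ℂ) *ᵥ y) ⬝ᵥ (M *ᵥ ((U : Matrix (Fin n) (Fin n) ℂ) *ᵥ y))
      = star y ⬝ᵥ ((star (U : Matrix (Fin n) (Fin n) ℂ) * M * (U : Matrix (Fin n) (Fin n) ℂ)) *ᵥ y) := by
  rw [star_mulVec, Matrix.dotProduct_mulVec, ← Matrix.star_eq_conjTranspose,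
    Matrix.dotProduct_mulVec, Matrix.dotProduct_mulVec, Matrix.vecMul_vecMul,
    Matrix.vecMul_vecMul, Matrix.mul_assoc]

lemma unitary_dot (U : Matrix.unitaryGroup (Fin n) ℂ) (y : Fin n → ℂ) :
    star ((U : Matrix (Fin n) (Fin n) ℂ) *ᵥ y) ⬝ᵥ ((U : Matrix (Fin n) (Fin n) ℂ) *ᵥ y)
      = star y ⬝ᵥ y := by
  have h := unitary_quad U 1 y
  simpa [Matrix.mul_one, (Unitary.mem_iff.mp U.2).1] using h

end Stmt9Aux4

namespace Stmt9Aux5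
open Stmt9Aux Stmt9Aux4

lemma sum_two {n : ℕ} {i₀ i₁ : Fin n} (hne : i₀ ≠ i₁) (u v : ℝ) :
    (∑ i, if i = i₀ then u else if i = i₁ then v else 0) = u + v := by
  have : (fun i => if i = i₀ then u else if i = i₁ then v else 0)
      = fun i => (if i = i₀ then u else 0) + (if i = i₁ then v else 0) := by
    funext i
    by_cases h0 : i = i₀ <;> by_cases h1 : i = i₁ <;>
      simp [h0, h1, hne, hne.symm]
  rw [this, Finset.sum_add_distrib, Finset.sum_ite_eq' Finset.univ i₀ fun _ => u,
    Finset.sum_ite_eq' Finset.univ i₁ fun _ => v]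
  simp

lemma herm_W {n : ℕ} (hn : 0 < n) {H : Matrix (Fin n) (Fin n) ℂ} (hH : H.IsHermitian) :
    ∃ a b : ℝ, a ≤ b ∧
      {z : ℂ | ∃ x : Fin n → ℂ, star x ⬝ᵥ x = 1 ∧ star x ⬝ᵥ (H *ᵥ x) = z}
        = Complex.ofReal '' Set.Icc a b := by
  haveI : Nonempty (Fin n) := ⟨⟨0, hn⟩⟩
  set lam := hH.eigenvalues with hlam
  set U := hH.eigenvectorUnitary with hU
  have hdiag : star (U : Matrix (Fin n) (Fin n) ℂ) * H * (U : Matrix (Fin n) (Fin n) ℂ)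
      = Matrix.diagonal (Complex.ofReal ∘ lam) := by
    have := hH.conjStarAlgAut_star_eigenvectorUnitary
    simpa [Unitary.conjStarAlgAut_apply] using this
  have hquad : ∀ y : Fin n → ℂ,
      star ((U : Matrix (Fin n) (Fin n) ℂ) *ᵥ y) ⬝ᵥ (H *ᵥ ((U : Matrix (Fin n) (Fin n) ℂ) *ᵥ y))
        = ((∑ i, lam i * Complex.normSq (y i) : ℝ) : ℂ) := by
    intro y
    rw [unitary_quad, hdiag, diag_quad]
  obtain ⟨i₀, -, hmin⟩ := Finset.exists_min_image Finset.univ lam Finset.univ_nonempty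
  obtain ⟨i₁, -, hmax⟩ := Finset.exists_max_image Finset.univ lam Finset.univ_nonempty
  refine ⟨lam i₀, lam i₁, hmin i₁ (Finset.mem_univ _), ?_⟩
  ext z
  constructor
  · rintro ⟨x, hx1, hx2⟩
    set y := star (U : Matrix (Fin n) (Fin n) ℂ) *ᵥ x with hy
    have hxy : (U : Matrix (Fin n) (Fin n) ℂ) *ᵥ y = x := by
      rw [hy, Matrix.mulVec_mulVec, (Unitary.mem_iff.mp U.2).2, Matrix.one_mulVec]
    have hsum1 : (∑ i, Complex.normSq (y i)) = 1 := by
      have h1 : star y ⬝ᵥ y = 1 := by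
        rw [← unitary_dot U y, hxy, hx1]
      rw [dot_self_eq] at h1
      exact_mod_cast h1
    have hz : z = ((∑ i, lam i * Complex.normSq (y i) : ℝ) : ℂ) := by
      rw [← hx2, ← hxy, hquad]
    refine ⟨∑ i, lam i * Complex.normSq (y i), ⟨?_, ?_⟩, hz.symm⟩
    · calc lam i₀ = ∑ i, lam i₀ * Complex.normSq (y i) := by
            rw [← Finset.mul_sum, hsum1, mul_one]
        _ ≤ ∑ i, lam i * Complex.normSq (y i) :=
            Finset.sum_le_sum fun i _ => mul_le_mul_of_nonneg_right
              (hmin i (Finset.mem_univ _)) (Complex.normSq_nonneg _)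
    · calc (∑ i, lam i * Complex.normSq (y i)) ≤ ∑ i, lam i₁ * Complex.normSq (y i) :=
            Finset.sum_le_sum fun i _ => mul_le_mul_of_nonneg_right
              (hmax i (Finset.mem_univ _)) (Complex.normSq_nonneg _)
        _ = lam i₁ := by rw [← Finset.mul_sum, hsum1, mul_one]
  · rintro ⟨c, ⟨hca, hcb⟩, rfl⟩
    by_cases hab : lam i₀ = lam i₁
    · -- degenerate: c = lam i₀
      have hc : c = lam i₀ := le_antisymm (hab ▸ hcb) hca
      set y : Fin n → ℂ := Pi.single i₀ 1 with hy
      have hns : ∀ i, Complex.normSq (y i) = if i = i₀ then 1 else 0 := by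
        intro i
        by_cases h : i = i₀ <;> simp [hy, h, Pi.single_apply]
      refine ⟨(U : Matrix (Fin n) (Fin n) ℂ) *ᵥ y, ?_, ?_⟩
      · rw [unitary_dot U y, dot_self_eq]
        simp [hns]
      · rw [hquad]
        norm_cast
        rw [hc]
        calc ∑ i, lam i * Complex.normSq (y i)
            = ∑ i, if i = i₀ then lam i₀ else 0 := by
              refine Finset.sum_congr rfl fun i _ => ?_
              rw [hns i]
              by_cases h : i = i₀ <;> simp [h]
          _ = lam i₀ := by simp
    · have hne : i₀ ≠ i₁ := fun h => hab (h ▸ rfl)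
      have hab' : lam i₀ < lam i₁ :=
        lt_of_le_of_ne (hmin i₁ (Finset.mem_univ _)) hab
      set s : ℝ := (c - lam i₀) / (lam i₁ - lam i₀) with hs
      have hba : (0:ℝ) < lam i₁ - lam i₀ := by linarith
      have hs0 : 0 ≤ s := div_nonneg (by linarith) hba.le
      have hs1 : s ≤ 1 := by
        rw [hs, div_le_one hba]
        linarith
      have h1s : 0 ≤ 1 - s := by linarith
      set y : Fin n → ℂ := fun i =>
        if i = i₀ then (Real.sqrt (1 - s) : ℂ) else if i = i₁ then (Real.sqrt s : ℂ) else 0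
        with hy
      have hns : ∀ i, Complex.normSq (y i)
          = if i = i₀ then 1 - s else if i = i₁ then s else 0 := by
        intro i
        by_cases h0 : i = i₀ <;> by_cases h1 : i = i₁ <;>
          simp [hy, h0, h1, hne.symm, Complex.normSq_ofReal, Real.mul_self_sqrt, h1s, hs0]
      refine ⟨(U : Matrix (Fin n) (Fin n) ℂ) *ᵥ y, ?_, ?_⟩
      · rw [unitary_dot U y, dot_self_eq]
        have : (∑ i, Complex.normSq (y i)) = (1 - s) + s := by
          simp only [hns]
          exact sum_two hne _ _
        rw [this]
        norm_num
      · rw [hquad]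
        refine congrArg _ ?_
        have : (∑ i, lam i * Complex.normSq (y i))
            = lam i₀ * (1 - s) + lam i₁ * s := by
          rw [show (∑ i, lam i * Complex.normSq (y i))
              = ∑ i, (if i = i₀ then lam i₀ * (1 - s) else if i = i₁ then lam i₁ * s else 0) from
            Finset.sum_congr rfl fun i _ => by
              rw [hns i]
              by_cases h0 : i = i₀ <;> by_cases h1 : i = i₁ <;> simp [h0, h1, hne.symm]]
          exact sum_two hne _ _
        rw [this, hs]
        field_simp
        ring
end Stmt9Aux5

namespace Stmt9Aux6
open Stmt9Aux Stmt9Aux2 Stmt9Aux3 Stmt9Aux4 Stmt9Aux5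

-- numerical range of a decomposed matrix is a segment
lemma seg_of_decomp {n : ℕ} (hn : 0 < n) (α β : ℂ) {H : Matrix (Fin n) (Fin n) ℂ}
    (hH : H.IsHermitian) :
    ∃ z₁ z₂ : ℂ, {z : ℂ | ∃ x : Fin n → ℂ, star x ⬝ᵥ x = 1 ∧
        star x ⬝ᵥ ((α • H + β • 1) *ᵥ x) = z} = segment ℝ z₁ z₂ := by
  obtain ⟨a, b, hab, hW⟩ := herm_W hn hH
  set f : ℝ →ᵃ[ℝ] ℂ := AffineMap.mk' (fun r : ℝ => α * (r : ℂ) + β)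
    (LinearMap.toSpanSingleton ℝ ℂ α) 0
    (by
      intro p
      simp [LinearMap.toSpanSingleton_apply, Complex.real_smul, mul_comm]) with hf
  have hfc : ∀ r : ℝ, f r = α * (r : ℂ) + β := fun r => rfl
  have hval : ∀ x : Fin n → ℂ, star x ⬝ᵥ x = 1 →
      star x ⬝ᵥ ((α • H + β • 1) *ᵥ x) = α * (star x ⬝ᵥ (H *ᵥ x)) + β := by
    intro x hx
    rw [Matrix.add_mulVec, dotProduct_add, Matrix.smul_mulVec, Matrix.smul_mulVec,
      Matrix.one_mulVec, dotProduct_smul, dotProduct_smul, hx, smul_eq_mul, smul_eq_mul, mul_one]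
  refine ⟨f a, f b, ?_⟩
  have himg : {z : ℂ | ∃ x : Fin n → ℂ, star x ⬝ᵥ x = 1 ∧
      star x ⬝ᵥ ((α • H + β • 1) *ᵥ x) = z} = f '' Set.Icc a b := by
    ext z
    constructor
    · rintro ⟨x, hx1, hx2⟩
      have hmem : star x ⬝ᵥ (H *ᵥ x) ∈ Complex.ofReal '' Set.Icc a b := by
        rw [← hW]; exact ⟨x, hx1, rfl⟩
      obtain ⟨r, hr, hr2⟩ := hmem
      exact ⟨r, hr, by rw [hfc, hr2, ← hx2, hval x hx1]⟩
    · rintro ⟨r, hr, rfl⟩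
      have : (r : ℂ) ∈ {z : ℂ | ∃ x : Fin n → ℂ, star x ⬝ᵥ x = 1 ∧
          star x ⬝ᵥ (H *ᵥ x) = z} := by
        rw [hW]; exact ⟨r, hr, rfl⟩
      obtain ⟨x, hx1, hx2⟩ := this
      exact ⟨x, hx1, by rw [hval x hx1, hx2, hfc]⟩
  rw [himg, ← segment_eq_Icc hab, image_segment]

-- collinearity of spectrum of decomposed matrix
lemma collinear_of_decomp {n : ℕ} (α β : ℂ) {H : Matrix (Fin n) (Fin n) ℂ}
    (hH : H.IsHermitian) :
    Collinear ℝ (spectrum ℂ (α • H + β • (1 : Matrix (Fin n) (Fin n) ℂ))) := by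
  rw [collinear_iff_exists_forall_eq_smul_vadd]
  refine ⟨β, α, fun z hz => ?_⟩
  rw [spectrum.mem_iff] at hz
  by_cases hα : α = 0
  · refine ⟨0, ?_⟩
    have hzβ : z = β := by
      by_contra hne
      apply hz
      have : algebraMap ℂ (Matrix (Fin n) (Fin n) ℂ) z - (α • H + β • 1) = (z - β) • 1 := by
        rw [hα, Algebra.algebraMap_eq_smul_one]
        rw [zero_smul, zero_add, sub_smul]
      rw [this]
      exact (isUnit_smul_iff' (sub_ne_zero.mpr hne) _).mpr isUnit_one
    simp [hzβ]
  · have hz' : (z - β) / α ∈ spectrum ℂ H := by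
      rw [spectrum.mem_iff]
      intro hu
      apply hz
      have heq : algebraMap ℂ (Matrix (Fin n) (Fin n) ℂ) z - (α • H + β • 1)
          = α • (algebraMap ℂ (Matrix (Fin n) (Fin n) ℂ) ((z - β) / α) - H) := by
        rw [Algebra.algebraMap_eq_smul_one, Algebra.algebraMap_eq_smul_one, smul_sub,
          smul_smul, mul_div_cancel₀ _ hα, sub_smul]
        module
      rw [heq]
      exact (isUnit_smul_iff' hα _).mpr hu
    obtain ⟨r, hr⟩ := spec_real_of_hermitian hH hz'
    refine ⟨r, ?_⟩
    have : (r : ℂ) * α = z - β := by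
      rw [hr]
      field_simp
    rw [vadd_eq_add, Complex.real_smul, this]
    ring

-- decomposition from numerical range being a segment
lemma decomp_of_seg {n : ℕ} {A : Matrix (Fin n) (Fin n) ℂ} (z₁ z₂ : ℂ)
    (hseg : {z : ℂ | ∃ x : Fin n → ℂ, star x ⬝ᵥ x = 1 ∧ star x ⬝ᵥ (A *ᵥ x) = z}
      = segment ℝ z₁ z₂) :
    ∃ (α β : ℂ) (H : Matrix (Fin n) (Fin n) ℂ), H.IsHermitian ∧ A = α • H + β • 1 := by
  have hmem : ∀ x : Fin n → ℂ, star x ⬝ᵥ x = 1 →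
      ∃ t : ℝ, t ∈ Set.Icc (0:ℝ) 1 ∧ star x ⬝ᵥ (A *ᵥ x) = z₁ + t • (z₂ - z₁) := by
    intro x hx
    have : star x ⬝ᵥ (A *ᵥ x) ∈ segment ℝ z₁ z₂ := by
      rw [← hseg]; exact ⟨x, hx, rfl⟩
    rw [segment_eq_image'] at this
    obtain ⟨t, ht, ht2⟩ := this
    exact ⟨t, ht, ht2.symm⟩
  have hsub : ∀ x : Fin n → ℂ, star x ⬝ᵥ x = 1 →
      star x ⬝ᵥ ((A - z₁ • 1) *ᵥ x) = star x ⬝ᵥ (A *ᵥ x) - z₁ := by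
    intro x hx
    rw [Matrix.sub_mulVec, dotProduct_sub, Matrix.smul_mulVec, Matrix.one_mulVec,
      dotProduct_smul, hx, smul_eq_mul, mul_one]
  by_cases hd : z₂ - z₁ = 0
  · refine ⟨0, z₁, 0, isHermitian_zero, ?_⟩
    have h0 : A - z₁ • 1 = 0 := by
      apply quad_zero
      intro x hx
      obtain ⟨t, -, ht2⟩ := hmem x hx
      rw [hsub x hx, ht2, hd, smul_zero, add_zero, sub_self]
    rw [smul_zero, zero_add]
    exact sub_eq_zero.mp h0
  · set α := z₂ - z₁ with hα
    set B := α⁻¹ • (A - z₁ • 1) with hB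
    have hherm : B.IsHermitian := by
      apply Stmt9Aux2.quad_real_hermitian
      intro x hx
      obtain ⟨t, -, ht2⟩ := hmem x hx
      refine ⟨t, ?_⟩
      rw [hB, Matrix.smul_mulVec, dotProduct_smul, smul_eq_mul, hsub x hx, ht2,
        add_sub_cancel_left, Complex.real_smul]
      field_simp
    refine ⟨α, z₁, B, hherm, ?_⟩
    rw [hB, smul_smul, mul_inv_cancel₀ hd, one_smul]
    rw [sub_add_cancel]

-- decomposition from normality and collinear spectrum
lemma decomp_of_normal {n : ℕ} {A : Matrix (Fin n) (Fin n) ℂ}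
    (hA : A * Aᴴ = Aᴴ * A) (hcol : Collinear ℝ (spectrum ℂ A)) :
    ∃ (α β : ℂ) (H : Matrix (Fin n) (Fin n) ℂ), H.IsHermitian ∧ A = α • H + β • 1 := by
  obtain ⟨p, v, hline⟩ := (collinear_iff_exists_forall_eq_smul_vadd _).mp hcol
  by_cases hv : v = 0
  · set B := A - p • 1 with hB
    have hnormal : B * Bᴴ = Bᴴ * B := by
      rw [hB]
      simpa [one_smul] using normal_shift hA 1 p
    have hspec : spectrum ℂ B ⊆ Set.range Complex.ofReal := by
      intro μ hμ
      rw [spectrum.mem_iff] at hμ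
      have hμA : (μ + p) ∈ spectrum ℂ A := by
        rw [spectrum.mem_iff]
        intro hu
        apply hμ
        have : algebraMap ℂ (Matrix (Fin n) (Fin n) ℂ) (μ + p) - A
            = algebraMap ℂ (Matrix (Fin n) (Fin n) ℂ) μ - B := by
          rw [Algebra.algebraMap_eq_smul_one, Algebra.algebraMap_eq_smul_one, hB, add_smul]
          abel
        rw [← this]
        exact hu
      obtain ⟨t, ht⟩ := hline _ hμA
      rw [hv, smul_zero, vadd_eq_add, zero_add] at ht
      exact ⟨0, by rw [Complex.ofReal_zero]; linear_combination -ht⟩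
    have hherm : B.IsHermitian := normal_real_spec_hermitian hnormal hspec
    exact ⟨1, p, B, hherm, by rw [one_smul, hB]; abel⟩
  · set B := v⁻¹ • (A - p • 1) with hB
    have hnormal : B * Bᴴ = Bᴴ * B := normal_shift hA v⁻¹ p
    have hspec : spectrum ℂ B ⊆ Set.range Complex.ofReal := by
      intro μ hμ
      rw [spectrum.mem_iff] at hμ
      have hμA : (p + v * μ) ∈ spectrum ℂ A := by
        rw [spectrum.mem_iff]
        intro hu
        apply hμ
        have heq : algebraMap ℂ (Matrix (Fin n) (Fin n) ℂ) (p + v * μ) - A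
            = v • (algebraMap ℂ (Matrix (Fin n) (Fin n) ℂ) μ - B) := by
          rw [Algebra.algebraMap_eq_smul_one, Algebra.algebraMap_eq_smul_one, hB]
          simp only [smul_sub, smul_smul, mul_inv_cancel₀ hv, mul_inv_cancel_left₀ hv,
            one_smul, add_smul]
          abel
        rw [heq] at hu
        exact (isUnit_smul_iff' hv _).mp hu
      obtain ⟨t, ht⟩ := hline _ hμA
      rw [vadd_eq_add, Complex.real_smul] at ht
      refine ⟨t, ?_⟩
      have hμt : v * μ = v * t := by
        have : v * μ = (t : ℂ) * v := by linear_combination ht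
        rw [this]; ring
      have := mul_left_cancel₀ hv hμt
      rw [this]
    have hherm : B.IsHermitian := normal_real_spec_hermitian hnormal hspec
    refine ⟨v, p, B, hherm, ?_⟩
    rw [hB, smul_smul, mul_inv_cancel₀ hv, one_smul]
    rw [sub_add_cancel]

end Stmt9Aux6

open Stmt9Aux Stmt9Aux2 Stmt9Aux3 Stmt9Aux4 Stmt9Aux5 Stmt9Aux6 in
theorem stmt9 {n : ℕ} (hn : 0 < n) (A : Matrix (Fin n) (Fin n) ℂ) :
    (∃ z₁ z₂ : ℂ,
      {z : ℂ | ∃ x : Fin n → ℂ, star x ⬝ᵥ x = 1 ∧ star x ⬝ᵥ (A *ᵥ x) = z} = segment ℝ z₁ z₂)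
    ↔ (A * Aᴴ = Aᴴ * A ∧ Collinear ℝ (spectrum ℂ A)) := by
  constructor
  · rintro ⟨z₁, z₂, hseg⟩
    obtain ⟨α, β, H, hH, rfl⟩ := decomp_of_seg z₁ z₂ hseg
    exact ⟨normal_of_decomp α β hH, collinear_of_decomp α β hH⟩
  · rintro ⟨hA, hcol⟩
    obtain ⟨α, β, H, hH, rfl⟩ := decomp_of_normal hA hcol
    exact seg_of_decomp hn α β hH
end

section
/- Let A, B ∈ Mₙ(ℂ) be positive semidefinite contractions, and set T = [[AB, 0, A√(B-B²)], [√(A-A²)B, 0, √((A-A²))·√(B-B²)], [0, 0, 0]] ∈ M_{3n}(ℂ), arising as the compression product of the projection dilations of A and B. Then W(AB) ⊆ W(T) and σ(T) = σ(AB) ∪ {0}. -/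
open Matrix ComplexOrder

/-- The positive semidefinite square root of a positive semidefinite matrix
(the definition `Matrix.PosSemidef.sqrt` of the older Mathlib, since removed). -/
noncomputable def Matrix.PosSemidef.sqrt {n 𝕜 : Type*} [Fintype n] [RCLike 𝕜] [DecidableEq n]
    {A : Matrix n n 𝕜} (hA : A.PosSemidef) : Matrix n n 𝕜 :=
  hA.1.eigenvectorUnitary.1 * diagonal ((↑) ∘ (√·) ∘ hA.1.eigenvalues) *
  (star hA.1.eigenvectorUnitary : Matrix n n 𝕜)

lemma my_eval_charpoly {m : Type*} [Fintype m] [DecidableEq m]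
    (M : Matrix m m ℂ) (μ : ℂ) :
    M.charpoly.eval μ = (Matrix.scalar m μ - M).det := by
  rw [Matrix.charpoly, Polynomial.eval, ← Polynomial.coe_eval₂RingHom, RingHom.map_det]
  congr 1
  ext i j
  by_cases h : i = j <;>
    simp [Matrix.charmatrix_apply, h, Matrix.diagonal_apply, Matrix.scalar_apply]

lemma my_mem_spectrum_iff {m : Type*} [Fintype m] [DecidableEq m]
    (M : Matrix m m ℂ) (μ : ℂ) :
    μ ∈ spectrum ℂ M ↔ M.charpoly.IsRoot μ := by
  have key : algebraMap ℂ (Matrix m m ℂ) μ = Matrix.scalar m μ := by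
    ext i j
    by_cases h : i = j <;>
      simp [Matrix.algebraMap_eq_diagonal, Matrix.scalar_apply, Matrix.diagonal_apply, h]
  rw [spectrum.mem_iff, key, Matrix.isUnit_iff_isUnit_det, isUnit_iff_ne_zero, not_ne_iff,
    Polynomial.IsRoot, my_eval_charpoly]

theorem stmt14 {n : ℕ} (hn : 0 < n) (A B : Matrix (Fin n) (Fin n) ℂ)
    (hA : A.PosSemidef) (hB : B.PosSemidef)
    (hA1 : (1 - A).PosSemidef) (hB1 : (1 - B).PosSemidef)
    (hSA : (A - A * A).PosSemidef) (hSB : (B - B * B).PosSemidef)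
    (T : Matrix ((Fin n ⊕ Fin n) ⊕ Fin n) ((Fin n ⊕ Fin n) ⊕ Fin n) ℂ)
    (hT : T = Matrix.fromBlocks
      (Matrix.fromBlocks (A * B) 0 (hSA.sqrt * B) 0)
      (Matrix.fromRows (A * hSB.sqrt) (hSA.sqrt * hSB.sqrt)) 0 0) :
    ({z : ℂ | ∃ x : Fin n → ℂ, star x ⬝ᵥ x = 1 ∧ star x ⬝ᵥ ((A * B) *ᵥ x) = z} ⊆
      {z : ℂ | ∃ y : (Fin n ⊕ Fin n) ⊕ Fin n → ℂ, star y ⬝ᵥ y = 1 ∧ star y ⬝ᵥ (T *ᵥ y) = z}) ∧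
    spectrum ℂ T = spectrum ℂ (A * B) ∪ {0} := by
  constructor
  · rintro z ⟨x, hx1, hxz⟩
    refine ⟨Sum.elim (Sum.elim x 0) 0, ?_, ?_⟩
    · simp [Function.star_sumElim, sumElim_dotProduct_sumElim, hx1]
    · subst hT
      simp [Function.star_sumElim, Matrix.fromBlocks_mulVec,
        sumElim_dotProduct_sumElim, hxz]
  · have hcp : T.charpoly = (A * B).charpoly * Polynomial.X ^ n * Polynomial.X ^ n := by
      subst hT
      rw [Matrix.charpoly_fromBlocks_zero₂₁, Matrix.charpoly_fromBlocks_zero₁₂]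
      have hz : (0 : Matrix (Fin n) (Fin n) ℂ).charpoly = Polynomial.X ^ n := by
        rw [Matrix.charpoly]
        have : Matrix.charmatrix (0 : Matrix (Fin n) (Fin n) ℂ)
            = Matrix.diagonal (fun _ => (Polynomial.X : Polynomial ℂ)) := by
          ext i j
          by_cases h : i = j <;> simp [Matrix.charmatrix_apply, h, Matrix.diagonal_apply]
        rw [this, Matrix.det_diagonal]
        simp
      rw [hz]
    ext μ
    rw [Set.mem_union, my_mem_spectrum_iff, my_mem_spectrum_iff, hcp]
    simp only [Polynomial.IsRoot, Polynomial.eval_mul, Polynomial.eval_pow,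
      Polynomial.eval_X, mul_eq_zero, pow_eq_zero_iff hn.ne', Set.mem_singleton_iff]
    tauto
end
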